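/- Let q be a prime power, let m ≤ n and 1 ≤ d ≤ m, and let C be an additive subgroup of the F_q-linear maps from F_q^m to F_q^n with |C| = q^(n(m−d+1)) such that every nonzero element of C has rank at least d. For any (m−d)-dimensional F_q-subspace U of F_q^m, the set C_U = {X ∈ C : U ⊆ ker(X)} satisfies |C_U| = q^n. -/

import Mathlib

/-- In an additive MRD code `C` of minimum distance `d` in the space of
`F_q`-linear maps `F_q^m → F_q^n` (`m ≤ n`), for every `(m-d)`-dimensional subspace `U`
of `F_q^m` the subcode `C_U = {X ∈ C : U ⊆ ker X}` has exactly `q^n` elements. -/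
theorem MRD_subcode_card (F : Type*) [Field F] [Fintype F]
    (m n d : ℕ) (hmn : m ≤ n) (hd1 : 1 ≤ d) (hdm : d ≤ m)
    (C : AddSubgroup ((Fin m → F) →ₗ[F] (Fin n → F)))
    (hcard : Nat.card C = Fintype.card F ^ (n * (m - d + 1)))
    (hrank : ∀ X ∈ C, X ≠ 0 → d ≤ Module.finrank F (LinearMap.range X))
    (U : Submodule F (Fin m → F)) (hU : Module.finrank F U = m - d) :
    Nat.card {X : (Fin m → F) →ₗ[F] (Fin n → F) // X ∈ C ∧ U ≤ LinearMap.ker X}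
      = Fintype.card F ^ n := by
  classical
  set q := Fintype.card F with hqdef
  have hq : 1 < q := Fintype.one_lt_card
  have hfin : Finite ((Fin m → F) →ₗ[F] (Fin n → F)) :=
    Finite.of_injective _ DFunLike.coe_injective
  -- a vector outside U
  have hfrtop : Module.finrank F (Fin m → F) = m := Module.finrank_fin_fun F
  have hUm : Module.finrank F U < m := by rw [hU]; omega
  obtain ⟨v, hv⟩ : ∃ v, v ∉ U := by
    by_contra h
    push_neg at h
    have : U = ⊤ := Submodule.eq_top_iff'.mpr h
    rw [this, finrank_top, hfrtop] at hUm
    omega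
  -- key injectivity fact
  have key : ∀ Z ∈ C, U ≤ LinearMap.ker Z → Z v = 0 → Z = 0 := by
    intro Z hZ hker hv0
    by_contra hZ0
    have h1 : U ⊔ Submodule.span F {v} ≤ LinearMap.ker Z := by
      refine sup_le hker ?_
      rw [Submodule.span_le, Set.singleton_subset_iff]
      exact hv0
    have h2 : U < U ⊔ Submodule.span F {v} := by
      refine lt_of_le_of_ne le_sup_left ?_
      intro h
      exact hv (h ▸ Submodule.mem_sup_right (Submodule.mem_span_singleton_self v))
    have h3 : Module.finrank F U <
        Module.finrank F (U ⊔ Submodule.span F {v} : Submodule F (Fin m → F)) :=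
      Submodule.finrank_lt_finrank_of_lt h2
    have h4 := Submodule.finrank_mono h1
    have h5 := LinearMap.finrank_range_add_finrank_ker Z
    have h6 := hrank Z hZ hZ0
    rw [hfrtop] at h5
    omega
  -- the subcode as a subtype
  have hinj : Function.Injective
      (fun X : {X : (Fin m → F) →ₗ[F] (Fin n → F) // X ∈ C ∧ U ≤ LinearMap.ker X} =>
        X.val v) := by
    rintro ⟨X, hXC, hXU⟩ ⟨Y, hYC, hYU⟩ h
    simp only at h
    have hm : X - Y ∈ C := sub_mem hXC hYC
    have hk : U ≤ LinearMap.ker (X - Y) := by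
      intro u hu
      have h1 : X u = 0 := hXU hu
      have h2 : Y u = 0 := hYU hu
      simp [LinearMap.mem_ker, h1, h2]
    have h0 : (X - Y) v = 0 := by simp [h]
    have := key _ hm hk h0
    have : X = Y := by rwa [sub_eq_zero] at this
    simpa using this
  have hupper : Nat.card {X : (Fin m → F) →ₗ[F] (Fin n → F) // X ∈ C ∧ U ≤ LinearMap.ker X}
      ≤ q ^ n := by
    have := Nat.card_le_card_of_injective _ hinj
    rwa [Nat.card_eq_fintype_card (α := Fin n → F), Fintype.card_fun, Fintype.card_fin] at this
  -- restriction homomorphism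
  let φ : C →+ (U →ₗ[F] (Fin n → F)) :=
    { toFun := fun X => (X : (Fin m → F) →ₗ[F] (Fin n → F)).domRestrict U
      map_zero' := by ext u; simp
      map_add' := by intro X Y; ext u; simp }
  have hker_iff : ∀ X : C, X ∈ φ.ker ↔ U ≤ LinearMap.ker (X : (Fin m → F) →ₗ[F] (Fin n → F)) := by
    intro X
    simp only [AddMonoidHom.mem_ker]
    constructor
    · intro h u hu
      have := DFunLike.congr_fun h ⟨u, hu⟩
      simpa [φ, LinearMap.mem_ker] using this
    · intro h
      ext u
      have h0 : (X : (Fin m → F) →ₗ[F] (Fin n → F)) u.val = 0 := h u.2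
      simp [φ, h0]
  -- the subtype is equivalent to ker φ
  have hcongr : Nat.card {X : (Fin m → F) →ₗ[F] (Fin n → F) // X ∈ C ∧ U ≤ LinearMap.ker X}
      = Nat.card φ.ker := by
    refine Nat.card_congr ?_
    refine Equiv.symm ?_
    refine Equiv.trans ?_ (Equiv.subtypeSubtypeEquivSubtypeInter
      (· ∈ C) (fun X => U ≤ LinearMap.ker X))
    exact Equiv.subtypeEquivRight fun X => hker_iff X
  -- counting
  have h1 : Nat.card C = Nat.card (C ⧸ φ.ker) * Nat.card φ.ker :=
    AddSubgroup.card_eq_card_quotient_mul_card_addSubgroup φ.ker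
  have h2 : Nat.card (C ⧸ φ.ker) = Nat.card φ.range :=
    Nat.card_congr (QuotientAddGroup.quotientKerEquivRange φ).toEquiv
  have hfinHom : Finite (U →ₗ[F] (Fin n → F)) := Finite.of_injective _ DFunLike.coe_injective
  have h3 : Nat.card φ.range ≤ Nat.card (U →ₗ[F] (Fin n → F)) :=
    Nat.card_le_card_of_injective _ Subtype.val_injective
  have h4 : Nat.card (U →ₗ[F] (Fin n → F)) = q ^ (n * (m - d)) := by
    have hfr : Module.finrank F (U →ₗ[F] (Fin n → F)) = (m - d) * n := by
      rw [Module.finrank_linearMap, hU, Module.finrank_fin_fun]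
    have : Finite (U →ₗ[F] (Fin n → F)) := Finite.of_injective _ DFunLike.coe_injective
    have := Fintype.ofFinite (U →ₗ[F] (Fin n → F))
    rw [Nat.card_eq_fintype_card, Module.card_eq_pow_finrank (K := F), hfr, Nat.mul_comm]
  have hlower : q ^ n ≤ Nat.card φ.ker := by
    have hq0 : 0 < q ^ (n * (m - d)) := Nat.pow_pos (by omega)
    have hsplit : q ^ (n * (m - d + 1)) = q ^ (n * (m - d)) * q ^ n := by
      rw [← pow_add]; ring_nf
    have hle : q ^ (n * (m - d)) * q ^ n ≤ q ^ (n * (m - d)) * Nat.card φ.ker := by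
      calc q ^ (n * (m - d)) * q ^ n = Nat.card C := by rw [hcard, hsplit]
        _ = Nat.card (C ⧸ φ.ker) * Nat.card φ.ker := h1
        _ ≤ q ^ (n * (m - d)) * Nat.card φ.ker := by
            refine Nat.mul_le_mul_right _ ?_
            rw [h2, ← h4]; exact h3
    exact Nat.le_of_mul_le_mul_left hle hq0
  rw [hcongr]
  exact le_antisymm (hcongr ▸ hupper) hlower
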